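/- arXiv:1809.07288 — 3 statements merged into one kernel-verified Lean document; each statement's English description precedes it below -/
import Mathlib

section
/- Let X(t) = { x ∈ ℝ² | x₂ ≥ 0 and x₂ ≤ x₁² − t }. Then X is not forward Lipschitz continuous at t = 0; that is, there is no L > 0 and D > 0 such that X(0) ⊆ X(δ) + δL𝔹 for all δ ∈ [0, D). -/
open Filter Topology Metric Set Pointwise

/-- Forward Lipschitz continuity of `X` at time `t` with constant `L`. -/
def forwardLipschitzAt (X : ℝ → Set (EuclideanSpace ℝ (Fin 2)))
    (t : ℝ) (L : ℝ) : Prop :=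
  ∃ D > 0, ∀ δ, 0 ≤ δ → δ < D →
    X t ⊆ X (t + δ) + (δ * L) • Metric.closedBall (0 : EuclideanSpace ℝ (Fin 2)) 1

/-- `X(t) = {x ∈ ℝ² | x₂ ≥ 0, x₂ ≤ x₁² − t}` is not forward Lipschitz
continuous at `t = 0`. -/
theorem not_forwardLipschitz_parabola :
    ¬ ∃ L > 0, forwardLipschitzAt
      (fun t => {x : EuclideanSpace ℝ (Fin 2) | 0 ≤ x 1 ∧ x 1 ≤ (x 0) ^ 2 - t})
      0 L := by
  rintro ⟨L, hL, D, hD, h⟩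
  set δ := min (D / 2) (1 / (2 * L ^ 2)) with hδdef
  have hL2 : 0 < 2 * L ^ 2 := by positivity
  have hδpos : 0 < δ := lt_min (by linarith) (by positivity)
  have hδD : δ < D := lt_of_le_of_lt (min_le_left _ _) (by linarith)
  have h0 : (0 : EuclideanSpace ℝ (Fin 2)) ∈
      {x : EuclideanSpace ℝ (Fin 2) | 0 ≤ x 1 ∧ x 1 ≤ (x 0) ^ 2 - 0} := by
    constructor <;> simp
  have hmem := h δ hδpos.le hδD h0
  rw [Set.mem_add] at hmem
  obtain ⟨y, hy, z, hz, hyz⟩ := hmem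
  rw [Set.mem_smul_set] at hz
  obtain ⟨w, hw, hwz⟩ := hz
  rw [mem_closedBall, dist_zero_right] at hw
  have hznorm : ‖z‖ ≤ δ * L := by
    rw [← hwz, norm_smul]
    calc ‖(δ * L)‖ * ‖w‖ ≤ ‖(δ * L)‖ * 1 := by
          exact mul_le_mul_of_nonneg_left hw (norm_nonneg _)
      _ = δ * L := by
          rw [mul_one, Real.norm_eq_abs, abs_of_nonneg (by positivity)]
  have hy0 : y = -z := eq_neg_of_add_eq_zero_left hyz
  have hynorm : ‖y‖ ≤ δ * L := by rw [hy0, norm_neg]; exact hznorm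
  have hsq : (y 0) ^ 2 ≤ ‖y‖ ^ 2 := by
    rw [EuclideanSpace.norm_eq, Real.sq_sqrt (by positivity), Fin.sum_univ_two]
    have : (y 0) ^ 2 = ‖y 0‖ ^ 2 := by rw [Real.norm_eq_abs, sq_abs]
    nlinarith [sq_nonneg ‖y 1‖]
  obtain ⟨hy1, hy2⟩ := hy
  have hδle : δ ≤ (y 0) ^ 2 := by simp only [zero_add] at hy2; linarith
  have hnorm2 : ‖y‖ ^ 2 ≤ (δ * L) ^ 2 := by nlinarith [norm_nonneg y]
  have hδ2 : δ ≤ 1 / (2 * L ^ 2) := min_le_right _ _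
  have key : δ ≤ δ ^ 2 * L ^ 2 := by nlinarith
  have h1 : 1 ≤ δ * L ^ 2 := by nlinarith [mul_pos hδpos hδpos]
  have h2 : δ * (2 * L ^ 2) ≤ 1 := by
    calc δ * (2 * L ^ 2) ≤ (1 / (2 * L ^ 2)) * (2 * L ^ 2) :=
          mul_le_mul_of_nonneg_right hδ2 hL2.le
      _ = 1 := by field_simp
  linarith
end

section
/- Let X_a(t) = { x ∈ ℝ² | x₂ ≥ 0 and x₂ ≤ |x₁| − t }. Then the temporal tangent cone of X_a at the point x = (0,0) and time t = 0 equals { v ∈ ℝ² | v₂ ≥ 0 and v₂ ≤ |v₁| − 1 }. -/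
open Filter Topology Metric Set

/-- Temporal tangent cone of a set-valued map on ℝ². -/
def temporalTangentCone (X : ℝ → Set (EuclideanSpace ℝ (Fin 2)))
    (t : ℝ) (x : EuclideanSpace ℝ (Fin 2)) : Set (EuclideanSpace ℝ (Fin 2)) :=
  {v | ∃ (xk : ℕ → EuclideanSpace ℝ (Fin 2)) (δk : ℕ → ℝ),
    (∀ k, 0 < δk k) ∧ Tendsto δk atTop (𝓝 0) ∧ Tendsto xk atTop (𝓝 x) ∧
    (∀ k, xk k ∈ X (t + δk k)) ∧
    Tendsto (fun k => (δk k)⁻¹ • (xk k - x)) atTop (𝓝 v)}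

/-- the temporal tangent cone of
`X_a(t) = {x ∈ ℝ² | x₂ ≥ 0, x₂ ≤ |x₁| − t}` at `x = (0,0)`, `t = 0` equals
`{v | v₂ ≥ 0, v₂ ≤ |v₁| − 1}`. -/
theorem temporalTangentCone_wedge :
    temporalTangentCone
      (fun t => {x : EuclideanSpace ℝ (Fin 2) | 0 ≤ x 1 ∧ x 1 ≤ |x 0| - t})
      0 0
      = {v : EuclideanSpace ℝ (Fin 2) | 0 ≤ v 1 ∧ v 1 ≤ |v 0| - 1} := by
  ext v
  simp only [temporalTangentCone, Set.mem_setOf_eq]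
  constructor
  · rintro ⟨xk, δk, hδpos, hδ0, hx0, hmem, hlim⟩
    have hcoord : ∀ i : Fin 2,
        Tendsto (fun k => (δk k)⁻¹ * (xk k i)) atTop (𝓝 (v i)) := by
      intro i
      have := ((EuclideanSpace.proj (𝕜 := ℝ) i).continuous.tendsto v).comp hlim
      simpa [Function.comp_def, sub_zero] using this
    constructor
    · refine ge_of_tendsto (hcoord 1) (Eventually.of_forall fun k => ?_)
      exact mul_nonneg (inv_nonneg.mpr (hδpos k).le) (hmem k).1
    · have habs : Tendsto (fun k => |(δk k)⁻¹ * (xk k 0)| - 1) atTop (𝓝 (|v 0| - 1)) :=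
        ((hcoord 0).abs).sub tendsto_const_nhds
      refine le_of_tendsto_of_tendsto' (hcoord 1) habs fun k => ?_
      have hδ := hδpos k
      have h2 := (hmem k).2
      rw [zero_add] at h2
      have : (δk k)⁻¹ * (xk k 1) ≤ (δk k)⁻¹ * (|xk k 0| - δk k) :=
        mul_le_mul_of_nonneg_left h2 (inv_nonneg.mpr hδ.le)
      calc (δk k)⁻¹ * (xk k 1) ≤ (δk k)⁻¹ * (|xk k 0| - δk k) := this
        _ = |(δk k)⁻¹ * (xk k 0)| - 1 := by
            rw [abs_mul, abs_of_pos (inv_pos.mpr hδ), mul_sub,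
              inv_mul_cancel₀ hδ.ne']
  · rintro ⟨hv1, hv2⟩
    refine ⟨fun k => ((k : ℝ) + 1)⁻¹ • v, fun k => ((k : ℝ) + 1)⁻¹,
      fun k => by positivity, ?_, ?_, fun k => ?_, ?_⟩
    · exact tendsto_one_div_add_atTop_nhds_zero_nat.congr (by simp [one_div])
    · have : Tendsto (fun k : ℕ => ((k : ℝ) + 1)⁻¹) atTop (𝓝 0) :=
        tendsto_one_div_add_atTop_nhds_zero_nat.congr (by simp [one_div])
      simpa using this.smul_const v
    · have hk : (0:ℝ) < (k : ℝ) + 1 := by positivity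
      constructor
      · simpa using mul_nonneg (inv_nonneg.mpr hk.le) hv1
      · have : ((k : ℝ) + 1)⁻¹ * (v 1) ≤ ((k : ℝ) + 1)⁻¹ * (|v 0| - 1) :=
          mul_le_mul_of_nonneg_left hv2 (inv_nonneg.mpr hk.le)
        simpa [abs_mul, abs_of_pos (inv_pos.mpr hk), mul_sub, zero_add] using this
    · have : ∀ k : ℕ, (((k : ℝ) + 1)⁻¹)⁻¹ • ((((k : ℝ) + 1)⁻¹ • v) - 0) = v := by
        intro k
        have hk : ((k : ℝ) + 1) ≠ 0 := by positivity
        rw [sub_zero, smul_smul, inv_inv, mul_inv_cancel₀ hk, one_smul]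
      exact tendsto_const_nhds.congr fun k => (this k).symm
end

section
/- Let X_b(t) = { x ∈ ℝ² | x₂ ≥ 0 and x₂ ≤ x₁² − t }. Then the temporal tangent cone of X_b at x = (0,0) and time t = 0 is empty. -/
open Filter Topology Metric Set

/-- the temporal tangent cone of
`X_b(t) = {x ∈ ℝ² | x₂ ≥ 0, x₂ ≤ x₁² − t}` at `x = (0,0)`, `t = 0` is empty. -/
theorem temporalTangentCone_parabola_empty :
    temporalTangentCone
      (fun t => {x : EuclideanSpace ℝ (Fin 2) | 0 ≤ x 1 ∧ x 1 ≤ (x 0) ^ 2 - t})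
      0 0 = ∅ := by
  ext v
  simp only [temporalTangentCone, mem_setOf_eq, mem_empty_iff_false, iff_false]
  rintro ⟨xk, δk, hδpos, hδ0, hx, hmem, hv⟩
  -- first coordinate of the difference quotient
  set f : ℕ → ℝ := fun k => (δk k)⁻¹ * (xk k 0) with hf
  have hvf : Tendsto f atTop (𝓝 (v 0)) := by
    have := ((EuclideanSpace.proj (0 : Fin 2)).continuous.tendsto v).comp hv
    convert this using 1
    funext k
    simp [f]
    rfl
  -- key bound: δ_k ≤ (xk k 0)^2
  have hkey : ∀ k, δk k ≤ (xk k 0) ^ 2 := by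
    intro k
    have h := hmem k
    simp only [mem_setOf_eq, zero_add] at h
    linarith [h.1, h.2]
  -- then |f k| ≥ (√(δk k))⁻¹
  have hbound : ∀ k, (Real.sqrt (δk k))⁻¹ ≤ |f k| := by
    intro k
    have hδk := hδpos k
    have hs : 0 < Real.sqrt (δk k) := Real.sqrt_pos.mpr hδk
    have h1 : Real.sqrt (δk k) ≤ |xk k 0| := by
      have := Real.sqrt_le_sqrt (hkey k)
      rwa [Real.sqrt_sq_eq_abs] at this
    have hmul : Real.sqrt (δk k) * Real.sqrt (δk k) = δk k := Real.mul_self_sqrt hδk.le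
    have : (Real.sqrt (δk k))⁻¹ = (δk k)⁻¹ * Real.sqrt (δk k) := by
      field_simp
      rw [Real.sq_sqrt hδk.le]
    rw [this, abs_mul, abs_of_pos (inv_pos.mpr hδk)]
    exact mul_le_mul_of_nonneg_left h1 (inv_pos.mpr hδk).le
  -- (√δk)⁻¹ → ∞
  have hsq : Tendsto (fun k => Real.sqrt (δk k)) atTop (𝓝[>] 0) := by
    refine tendsto_nhdsWithin_of_tendsto_nhds_of_eventually_within _ ?_ ?_
    · have : Tendsto (fun k => Real.sqrt (δk k)) atTop (𝓝 (Real.sqrt 0)) :=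
        (Real.continuous_sqrt.tendsto 0).comp hδ0
      simpa using this
    · exact Eventually.of_forall fun k => Real.sqrt_pos.mpr (hδpos k)
  have htop : Tendsto (fun k => (Real.sqrt (δk k))⁻¹) atTop atTop :=
    hsq.inv_tendsto_nhdsGT_zero
  have habs : Tendsto (fun k => |f k|) atTop atTop :=
    tendsto_atTop_mono hbound htop
  exact not_tendsto_atTop_of_tendsto_nhds (hvf.abs) habs
end
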